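/- arXiv:2203.02006 — 4 statements merged into one kernel-verified Lean document; each statement's English description precedes it below -/
import Mathlib

section
/- Let d ≥ 2, r > 0, and let D = {(x_i, y_i)}_{i=1}^n ⊂ ℝ^d × {−1, +1} be a dataset such that the first coordinate of every covariate satisfies (x_i)_1 = y_i·r/2. Let x̃_i ∈ ℝ^{d−1} denote x_i with its first coordinate removed, and suppose the induced dataset D̃ = {(x̃_i, y_i)}_{i=1}^n is linearly separable, with normalized max-ℓ2-margin solution θ̃ ∈ ℝ^{d−1} (‖θ̃‖₂ = 1) and margin γ̃ = min_{i∈[n]} y_i θ̃ᵀ x̃_i > 0. Then the normalized max-ℓ2-margin solution of D is θ̂ = (1/√(r² + 4γ̃²)) · (r, 2γ̃·θ̃), i.e. θ̂ is the unique unit-ℓ2-norm maximizer of min_{i∈[n]} y_i θᵀ x_i. -/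
open MeasureTheory ProbabilityTheory Real Set
open scoped ENNReal BigOperators

noncomputable section

/-- Euclidean dot product on `Fin d → ℝ`. -/
def dot {d : ℕ} (u v : Fin d → ℝ) : ℝ := ∑ j, u j * v j

/-- Euclidean (`ℓ2`) norm on `Fin d → ℝ`. -/
def norm2 {d : ℕ} (u : Fin d → ℝ) : ℝ := Real.sqrt (∑ j, (u j) ^ 2)

/-- The (minimum) margin of the linear classifier `θ` on the dataset `{(x i, y i)}`. -/
def margin {d n : ℕ} (x : Fin n → Fin d → ℝ) (y : Fin n → ℝ) (θ : Fin d → ℝ) : ℝ :=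
  ⨅ i, y i * dot θ (x i)

section aux
variable {d n : ℕ}

lemma dot_smul' (c : ℝ) (u v : Fin d → ℝ) : dot (c • u) v = c * dot u v := by
  simp [dot, Finset.mul_sum, mul_assoc]

lemma dot_add' (u u' v : Fin d → ℝ) : dot (u + u') v = dot u v + dot u' v := by
  simp [dot, add_mul, Finset.sum_add_distrib]

lemma dot_zero' (v : Fin d → ℝ) : dot (0 : Fin d → ℝ) v = 0 := by simp [dot]

lemma norm2_nonneg' (u : Fin d → ℝ) : 0 ≤ norm2 u := Real.sqrt_nonneg _

lemma sq_norm2 (u : Fin d → ℝ) : norm2 u ^ 2 = ∑ j, u j ^ 2 := by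
  rw [norm2, Real.sq_sqrt]; positivity

lemma norm2_smul (c : ℝ) (u : Fin d → ℝ) : norm2 (c • u) = |c| * norm2 u := by
  rw [norm2, norm2]
  have h : ∑ j, ((c • u) j) ^ 2 = c ^ 2 * ∑ j, (u j) ^ 2 := by
    simp [Finset.mul_sum, mul_pow]
  rw [h, Real.sqrt_mul (by positivity), Real.sqrt_sq_eq_abs]

lemma norm2_eq_zero {u : Fin d → ℝ} (h : norm2 u = 0) : u = 0 := by
  have hs : ∑ j, (u j) ^ 2 = 0 := by
    have := sq_norm2 u
    rw [h] at this; simpa using this.symm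
  funext j
  have := (Finset.sum_eq_zero_iff_of_nonneg (fun i _ => sq_nonneg (u i))).mp hs j (Finset.mem_univ j)
  have : u j = 0 := by nlinarith [this]
  simpa using this

lemma margin_le_apply [Nonempty (Fin n)] (x : Fin n → Fin d → ℝ) (y : Fin n → ℝ)
    (θ : Fin d → ℝ) (i : Fin n) : margin x y θ ≤ y i * dot θ (x i) :=
  ciInf_le (Finite.bddBelow_range _) i

lemma le_margin [Nonempty (Fin n)] {x : Fin n → Fin d → ℝ} {y : Fin n → ℝ}
    {θ : Fin d → ℝ} {c : ℝ} (h : ∀ i, c ≤ y i * dot θ (x i)) : c ≤ margin x y θ :=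
  le_ciInf h

lemma margin_smul {c : ℝ} (hc : 0 ≤ c) (x : Fin n → Fin d → ℝ) (y : Fin n → ℝ)
    (θ : Fin d → ℝ) : margin x y (c • θ) = c * margin x y θ := by
  unfold margin
  rw [Real.mul_iInf_of_nonneg hc]
  congr 1; funext i; rw [dot_smul']; ring

lemma margin_zero [Nonempty (Fin n)] (x : Fin n → Fin d → ℝ) (y : Fin n → ℝ) :
    margin x y (0 : Fin d → ℝ) = 0 := by
  unfold margin
  simp [dot_zero', ciInf_const]

lemma margin_add_le [Nonempty (Fin n)] (x : Fin n → Fin d → ℝ) (y : Fin n → ℝ)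
    (θ θ' : Fin d → ℝ) :
    margin x y θ + margin x y θ' ≤ margin x y (θ + θ') :=
  le_margin fun i => by
    have h1 := margin_le_apply x y θ i
    have h2 := margin_le_apply x y θ' i
    have h3 : y i * dot (θ + θ') (x i) = y i * dot θ (x i) + y i * dot θ' (x i) := by
      rw [dot_add']; ring
    rw [h3]; exact add_le_add h1 h2

lemma ciInf_const_add {ι : Type*} [Nonempty ι] [Finite ι] (c : ℝ) (f : ι → ℝ) :
    ⨅ i, (c + f i) = c + ⨅ i, f i := by
  apply le_antisymm
  · have h : ∀ i, (⨅ j, (c + f j)) ≤ c + f i := fun i =>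
      ciInf_le (Finite.bddBelow_range _) i
    have h2 : (⨅ j, (c + f j)) - c ≤ ⨅ i, f i :=
      le_ciInf fun i => by linarith [h i]
    linarith
  · exact le_ciInf fun i => by
      linarith [ciInf_le (Finite.bddBelow_range f) i]

lemma cs2 (a b p q : ℝ) :
    a * p + b * q ≤ Real.sqrt (a ^ 2 + b ^ 2) * Real.sqrt (p ^ 2 + q ^ 2) := by
  have h1 : 0 ≤ Real.sqrt (a ^ 2 + b ^ 2) * Real.sqrt (p ^ 2 + q ^ 2) := by positivity
  have h2 : (a * p + b * q) ^ 2 ≤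
      (Real.sqrt (a ^ 2 + b ^ 2) * Real.sqrt (p ^ 2 + q ^ 2)) ^ 2 := by
    rw [mul_pow, Real.sq_sqrt (by positivity), Real.sq_sqrt (by positivity)]
    nlinarith [sq_nonneg (a * q - b * p)]
  nlinarith [h1, h2]

end aux

set_option maxHeartbeats 1600000 in
/-- Lemma 1, first part. For a dataset in `ℝ^{m+1} × {±1}` (so `d = m+1 ≥ 2`)
whose first covariate coordinate is `y_i · r/2`, and whose induced dataset (first coordinate
removed) is linearly separable with normalized max-`ℓ2`-margin solution `θ̃` and margin `γ̃ > 0`,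
the normalized max-`ℓ2`-margin solution of the full dataset is
`θ̂ = (1/√(r² + 4γ̃²)) • (r, 2γ̃ θ̃)`: it has unit norm, it maximizes the minimum margin among
all `θ` with `‖θ‖₂ ≤ 1`, and it is the unique unit-norm maximizer. -/
theorem max_margin_closed_form
    {m n : ℕ} (hm : 1 ≤ m) (hn : 0 < n) (r : ℝ) (hr : 0 < r)
    (x : Fin n → Fin (m + 1) → ℝ) (y : Fin n → ℝ)
    (hy : ∀ i, y i = 1 ∨ y i = -1)
    (hx1 : ∀ i, x i 0 = y i * (r / 2))
    (θt : Fin m → ℝ) (γt : ℝ)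
    (hθt_norm : norm2 θt = 1)
    (hγt : γt = margin (fun i => Fin.tail (x i)) y θt)
    (hγt_pos : 0 < γt)
    (hθt_max : ∀ θ : Fin m → ℝ, norm2 θ ≤ 1 →
      margin (fun i => Fin.tail (x i)) y θ ≤ γt) :
    ∀ θhat : Fin (m + 1) → ℝ,
      θhat = (Real.sqrt (r ^ 2 + 4 * γt ^ 2))⁻¹ •
        (Fin.cons r ((2 * γt) • θt) : Fin (m + 1) → ℝ) →
      norm2 θhat = 1 ∧
      (∀ θ : Fin (m + 1) → ℝ, norm2 θ ≤ 1 → margin x y θ ≤ margin x y θhat) ∧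
      (∀ θ : Fin (m + 1) → ℝ, norm2 θ = 1 →
        (∀ θ' : Fin (m + 1) → ℝ, norm2 θ' ≤ 1 → margin x y θ' ≤ margin x y θ) →
        θ = θhat) := by
  intro θhat hθhat
  haveI : Nonempty (Fin n) := Fin.pos_iff_nonempty.mp hn
  set xt : Fin n → Fin m → ℝ := fun i => Fin.tail (x i) with hxt
  set s : ℝ := Real.sqrt (r ^ 2 + 4 * γt ^ 2) with hs
  have hs_pos : 0 < s := Real.sqrt_pos.mpr (by positivity)
  have hs_sq : s ^ 2 = r ^ 2 + 4 * γt ^ 2 := Real.sq_sqrt (by positivity)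
  have hsum_θt : ∑ j, (θt j) ^ 2 = 1 := by
    have h := sq_norm2 θt
    rw [hθt_norm] at h; simpa using h.symm
  -- decomposition of the margin
  have hdecomp : ∀ θ : Fin (m + 1) → ℝ,
      margin x y θ = θ 0 * (r / 2) + margin xt y (Fin.tail θ) := by
    intro θ
    have key : ∀ i, y i * dot θ (x i)
        = θ 0 * (r / 2) + y i * dot (Fin.tail θ) (xt i) := by
      intro i
      have hy2 : y i * y i = 1 := by rcases hy i with h | h <;> rw [h] <;> norm_num
      have hdot : dot θ (x i) = θ 0 * x i 0 + dot (Fin.tail θ) (xt i) := by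
        simp [dot, Fin.sum_univ_succ, hxt, Fin.tail]
      rw [hdot, hx1 i]
      calc y i * (θ 0 * (y i * (r / 2)) + dot (Fin.tail θ) (xt i))
          = (y i * y i) * (θ 0 * (r / 2)) + y i * dot (Fin.tail θ) (xt i) := by ring
        _ = θ 0 * (r / 2) + y i * dot (Fin.tail θ) (xt i) := by rw [hy2]; ring
    unfold margin
    calc (⨅ i, y i * dot θ (x i))
        = ⨅ i, (θ 0 * (r / 2) + y i * dot (Fin.tail θ) (xt i)) := by
          congr 1; funext i; exact key i
      _ = θ 0 * (r / 2) + ⨅ i, y i * dot (Fin.tail θ) (xt i) :=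
          ciInf_const_add _ _
  -- induced margin is bounded by norm times γt
  have hind : ∀ τ : Fin m → ℝ, margin xt y τ ≤ norm2 τ * γt := by
    intro τ
    by_cases h0 : norm2 τ = 0
    · have hτ0 : τ = 0 := norm2_eq_zero h0
      have hm0 : margin xt y τ = 0 := by rw [hτ0, margin_zero]
      rw [hm0, h0]; norm_num
    · have hpos : 0 < norm2 τ := lt_of_le_of_ne (norm2_nonneg' τ) (Ne.symm h0)
      have hunit : norm2 ((norm2 τ)⁻¹ • τ) = 1 := by
        rw [norm2_smul, abs_of_nonneg (by positivity)]
        field_simp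
      have hle := hθt_max _ hunit.le
      have heq : margin xt y ((norm2 τ)⁻¹ • τ) = (norm2 τ)⁻¹ * margin xt y τ :=
        margin_smul (by positivity) _ _ _
      rw [heq] at hle
      calc margin xt y τ = norm2 τ * ((norm2 τ)⁻¹ * margin xt y τ) := by
            field_simp
        _ ≤ norm2 τ * γt := by
            exact mul_le_mul_of_nonneg_left hle hpos.le
  -- coordinates of θhat
  have hθhat0 : θhat 0 = s⁻¹ * r := by rw [hθhat]; simp
  have hθhat_tail : Fin.tail θhat = (s⁻¹ * (2 * γt)) • θt := by
    funext j
    rw [hθhat]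
    simp [Fin.tail, mul_assoc]
  -- norm of θhat
  have hnorm_hat : norm2 θhat = 1 := by
    have hsum : ∑ j, (θhat j) ^ 2 = 1 := by
      rw [Fin.sum_univ_succ]
      have h1 : ∀ j : Fin m, θhat j.succ = s⁻¹ * (2 * γt) * θt j := by
        intro j
        have := congrFun hθhat_tail j
        simpa [Fin.tail] using this
      have h2 : ∑ j : Fin m, (θhat j.succ) ^ 2
          = (s⁻¹ * (2 * γt)) ^ 2 * ∑ j, (θt j) ^ 2 := by
        rw [Finset.mul_sum]
        exact Finset.sum_congr rfl fun j _ => by rw [h1 j]; ring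
      rw [h2, hsum_θt, hθhat0]
      have hsne : s ≠ 0 := ne_of_gt hs_pos
      field_simp
      nlinarith [hs_sq]
    rw [norm2, hsum, Real.sqrt_one]
  -- margin of θhat
  have hmargin_hat : margin x y θhat = s / 2 := by
    rw [hdecomp, hθhat_tail, margin_smul (by positivity), ← hγt, hθhat0]
    have hsne : s ≠ 0 := ne_of_gt hs_pos
    field_simp
    nlinarith [hs_sq]
  -- the universal upper bound on the ball
  have hub : ∀ θ : Fin (m + 1) → ℝ, norm2 θ ≤ 1 → margin x y θ ≤ s / 2 := by
    intro θ hθ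
    have hb : (θ 0) ^ 2 + (norm2 (Fin.tail θ)) ^ 2 = ∑ j, (θ j) ^ 2 := by
      rw [sq_norm2, Fin.sum_univ_succ]
      simp [Fin.tail]
    have hcs : θ 0 * (r / 2) + norm2 (Fin.tail θ) * γt
        ≤ norm2 θ * (s / 2) := by
      have h := cs2 (θ 0) (norm2 (Fin.tail θ)) (r / 2) γt
      have e1 : Real.sqrt ((θ 0) ^ 2 + (norm2 (Fin.tail θ)) ^ 2) = norm2 θ := by
        rw [hb]; rfl
      have e2 : Real.sqrt ((r / 2) ^ 2 + γt ^ 2) = s / 2 := by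
        have : (r / 2) ^ 2 + γt ^ 2 = (s / 2) ^ 2 := by nlinarith [hs_sq]
        rw [this, Real.sqrt_sq (by positivity)]
      rw [e1, e2] at h; exact h
    calc margin x y θ = θ 0 * (r / 2) + margin xt y (Fin.tail θ) := hdecomp θ
      _ ≤ θ 0 * (r / 2) + norm2 (Fin.tail θ) * γt := by
          linarith [hind (Fin.tail θ)]
      _ ≤ norm2 θ * (s / 2) := hcs
      _ ≤ s / 2 := by nlinarith [norm2_nonneg' θ]
  refine ⟨hnorm_hat, fun θ hθ => by rw [hmargin_hat]; exact hub θ hθ, ?_⟩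
  -- uniqueness
  intro θ hθnorm hθmax
  by_contra hne
  have hge : s / 2 ≤ margin x y θ := by
    have := hθmax θhat hnorm_hat.le
    rwa [hmargin_hat] at this
  have hle : margin x y θ ≤ s / 2 := hub θ hθnorm.le
  -- the sum vector
  have hmw : s ≤ margin x y (θ + θhat) := by
    have := margin_add_le x y θ θhat
    rw [hmargin_hat] at this
    linarith
  have hw_lt : norm2 (θ + θhat) < 2 := by
    have hsum1 : ∑ j, (θ j) ^ 2 = 1 := by
      have h := sq_norm2 θ; rw [hθnorm] at h; simpa using h.symm
    have hsum2 : ∑ j, (θhat j) ^ 2 = 1 := by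
      have h := sq_norm2 θhat; rw [hnorm_hat] at h; simpa using h.symm
    have hdiff : 0 < ∑ j, (θ j - θhat j) ^ 2 := by
      have hex : ∃ j, θ j ≠ θhat j := by
        by_contra hc
        push_neg at hc
        exact hne (funext hc)
      obtain ⟨j0, hj0⟩ := hex
      apply Finset.sum_pos' (fun j _ => sq_nonneg _)
      refine ⟨j0, Finset.mem_univ j0, ?_⟩
      have hne0 : θ j0 - θhat j0 ≠ 0 := sub_ne_zero.mpr hj0
      positivity
    have e1 : ∑ j, (((θ + θhat) j) ^ 2)
        = ((∑ j, (θ j) ^ 2 + ∑ j, (θ j) ^ 2) + (∑ j, (θhat j) ^ 2 + ∑ j, (θhat j) ^ 2))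
          - ∑ j, (θ j - θhat j) ^ 2 := by
      rw [← Finset.sum_add_distrib, ← Finset.sum_add_distrib, ← Finset.sum_add_distrib,
        ← Finset.sum_sub_distrib]
      exact Finset.sum_congr rfl fun j _ => by simp only [Pi.add_apply]; ring
    have hwsum : ∑ j, (((θ + θhat) j) ^ 2) < 4 := by
      rw [hsum1, hsum2] at e1
      linarith
    have h2 : norm2 (θ + θhat) ^ 2 < 4 := by rw [sq_norm2]; exact hwsum
    nlinarith [norm2_nonneg' (θ + θhat)]
  have hw_pos : 0 < norm2 (θ + θhat) := by
    rcases lt_or_eq_of_le (norm2_nonneg' (θ + θhat)) with h | h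
    · exact h
    · exfalso
      have h0 : θ + θhat = 0 := norm2_eq_zero h.symm
      rw [h0, margin_zero] at hmw
      linarith
  set c : ℝ := norm2 (θ + θhat) with hc
  have hunit : norm2 (c⁻¹ • (θ + θhat)) = 1 := by
    rw [norm2_smul, abs_of_nonneg (by positivity)]
    field_simp
    exact hc.symm
  have hmu : margin x y (c⁻¹ • (θ + θhat)) = c⁻¹ * margin x y (θ + θhat) :=
    margin_smul (by positivity) _ _ _
  have h1 : margin x y (c⁻¹ • (θ + θhat)) ≤ margin x y θ := hθmax _ hunit.le
  have h2 : c⁻¹ * s ≤ c⁻¹ * margin x y (θ + θhat) :=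
    mul_le_mul_of_nonneg_left hmw (by positivity)
  have h3 : s / 2 < c⁻¹ * s := by
    have hx : 0 < c⁻¹ * (2 - c) * s :=
      mul_pos (mul_pos (inv_pos.mpr hw_pos) (by linarith)) hs_pos
    have hcs : c⁻¹ * c * s = s := by
      rw [inv_mul_cancel₀ (ne_of_gt hw_pos)]; ring
    nlinarith [hx, hcs]
  rw [hmu] at h1
  linarith

end
end

section
/- Let d ≥ 2, r > 0, and let D = {(x_i, y_i)}_{i=1}^n ⊂ ℝ^d × {−1, +1} satisfy (x_i)_1 = y_i·r/2, with induced dataset D̃ (first coordinate removed) linearly separable with normalized max-ℓ2-margin solution θ̃ and margin γ̃ > 0, so that the normalized max-ℓ2-margin solution of D is θ̂ = (1/√(r² + 4γ̃²))·(r, 2γ̃·θ̃). Then for any r_test > 0 and σ > 0, the standard accuracy of θ̂ on data drawn from P_{r_test} equals Φ(r·r_test/(4σγ̃)), that is, P_{(X,Y)∼P_{r_test}}[Y·θ̂ᵀX > 0] = Φ(r·r_test/(4σγ̃)). -/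
open MeasureTheory ProbabilityTheory Real Set
open scoped ENNReal BigOperators

noncomputable section

/-- The isotropic Gaussian measure `N(0, σ² I_m)` on `ℝ^m`. -/
def gaussPi (m : ℕ) (σ : ℝ) : Measure (Fin m → ℝ) :=
  Measure.pi fun _ => gaussianReal 0 (Real.toNNReal (σ ^ 2))

/-- The data distribution `P_r` on `ℝ^{m+1} × {±1}`: the label `Y` is uniform on `{±1}`
and the covariate is `X = (Y · r/2, X̃)` with `X̃ ~ N(0, σ² I_m)`. -/
def Pdist (m : ℕ) (r σ : ℝ) : Measure ((Fin (m + 1) → ℝ) × ℝ) :=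
  (2⁻¹ : ℝ≥0∞) • (gaussPi m σ).map (fun xt => ((Fin.cons (r / 2) xt : Fin (m + 1) → ℝ), (1 : ℝ)))
    + (2⁻¹ : ℝ≥0∞) • (gaussPi m σ).map
        (fun xt => ((Fin.cons (-(r / 2)) xt : Fin (m + 1) → ℝ), (-1 : ℝ)))

/-- The standard normal cumulative distribution function `Φ`. -/
def stdGaussianCDF (z : ℝ) : ℝ := ((gaussianReal 0 1) (Iic z)).toReal

/-! ### Auxiliary lemmas -/

open scoped NNReal

lemma gaussianPDFReal_symm' (v : ℝ≥0) (x y : ℝ) :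
    gaussianPDFReal x v y = gaussianPDFReal y v x := by
  unfold gaussianPDFReal
  rw [show (y - x)^2 = (x - y)^2 by ring]

lemma gaussianPDFReal_le' (μ : ℝ) (v : ℝ≥0) (x : ℝ) :
    gaussianPDFReal μ v x ≤ (√(2 * π * v))⁻¹ := by
  unfold gaussianPDFReal
  have h1 : rexp (-(x - μ)^2 / (2 * v)) ≤ 1 := by
    rw [Real.exp_le_one_iff]
    by_cases hv : (v:ℝ) = 0
    · simp [hv]
    · have : (0:ℝ) < v := lt_of_le_of_ne v.coe_nonneg (Ne.symm hv)
      have : 0 ≤ (x - μ)^2 / (2 * v) := by positivity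
      rw [neg_div]
      linarith
  have h2 : (0:ℝ) ≤ (√(2 * π * v))⁻¹ := by positivity
  calc (√(2 * π * v))⁻¹ * rexp (-(x - μ)^2 / (2 * v)) ≤ (√(2 * π * v))⁻¹ * 1 :=
        mul_le_mul_of_nonneg_left h1 h2
    _ = _ := mul_one _

lemma gauss_conv_pdfReal {v w : ℝ≥0} (hv : v ≠ 0) (hw : w ≠ 0) (y : ℝ) :
    ∫ x, gaussianPDFReal 0 v x * gaussianPDFReal x w y
      = gaussianPDFReal 0 (v + w) y := by
  have hV : (0:ℝ) < v := lt_of_le_of_ne v.coe_nonneg (by exact_mod_cast (Ne.symm hv))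
  have hW : (0:ℝ) < w := lt_of_le_of_ne w.coe_nonneg (by exact_mod_cast (Ne.symm hw))
  set V : ℝ := (v:ℝ)
  set W : ℝ := (w:ℝ)
  set b : ℝ := (V + W) / (2 * V * W) with hb
  have hbpos : 0 < b := by positivity
  set μ0 : ℝ := V * y / (V + W) with hμ0
  have key : ∀ x : ℝ, gaussianPDFReal 0 v x * gaussianPDFReal x w y
      = ((√(2 * π * V))⁻¹ * (√(2 * π * W))⁻¹ * rexp (-y^2 / (2 * (V + W))))
        * rexp (-b * (x - μ0)^2) := by
    intro x
    unfold gaussianPDFReal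
    rw [show ((√(2 * π * V))⁻¹ * rexp (-(x - 0) ^ 2 / (2 * V))) *
        ((√(2 * π * W))⁻¹ * rexp (-(y - x) ^ 2 / (2 * W)))
      = (√(2 * π * V))⁻¹ * (√(2 * π * W))⁻¹ *
        (rexp (-(x - 0) ^ 2 / (2 * V)) * rexp (-(y - x) ^ 2 / (2 * W))) by ring]
    rw [mul_assoc ((√(2 * π * V))⁻¹ * (√(2 * π * W))⁻¹), ← Real.exp_add, ← Real.exp_add]
    congr 1
    have hVW : V + W ≠ 0 := by positivity
    have hV' : V ≠ 0 := ne_of_gt hV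
    have hW' : W ≠ 0 := ne_of_gt hW
    rw [hb, hμ0]
    congr 1
    field_simp
    ring
  rw [integral_congr_ae (ae_of_all _ key), integral_const_mul]
  have htr : ∫ x, rexp (-b * (x - μ0)^2) = ∫ x, rexp (-b * x ^ 2) :=
    integral_sub_right_eq_self (fun x => rexp (-b * x ^ 2)) μ0
  rw [htr, integral_gaussian]
  unfold gaussianPDFReal
  push_cast
  rw [show (-(y - 0)^2 / (2 * (V + W))) = -y^2 / (2 * (V + W)) by ring]
  rw [show (√(2 * π * V))⁻¹ * (√(2 * π * W))⁻¹ * rexp (-y ^ 2 / (2 * (V + W))) * √(π / b)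
    = ((√(2 * π * V))⁻¹ * (√(2 * π * W))⁻¹ * √(π / b)) * rexp (-y ^ 2 / (2 * (V + W))) by ring]
  congr 1
  rw [← Real.sqrt_inv, ← Real.sqrt_inv, ← Real.sqrt_mul (by positivity),
    ← Real.sqrt_mul (by positivity), ← Real.sqrt_inv]
  congr 1
  have hVW : V + W ≠ 0 := by positivity
  rw [hb]
  field_simp
  ring

lemma gauss_conv_pdf_lintegral {v w : ℝ≥0} (hv : v ≠ 0) (hw : w ≠ 0) (y : ℝ) :
    ∫⁻ x, gaussianPDF 0 v x * gaussianPDF x w y = gaussianPDF 0 (v + w) y := by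
  have hint : Integrable (fun x => gaussianPDFReal 0 v x * gaussianPDFReal x w y) := by
    have : (fun x => gaussianPDFReal 0 v x * gaussianPDFReal x w y)
        = fun x => gaussianPDFReal y w x * gaussianPDFReal 0 v x := by
      ext x; rw [gaussianPDFReal_symm' w x y]; ring
    rw [this]
    exact (integrable_gaussianPDFReal 0 v).bdd_mul
      (measurable_gaussianPDFReal y w).aestronglyMeasurable
      (c := (√(2 * π * w))⁻¹) (ae_of_all _ fun x => by
        rw [Real.norm_eq_abs, abs_of_nonneg (gaussianPDFReal_nonneg _ _ _)]
        exact gaussianPDFReal_le' y w x)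
  calc ∫⁻ x, gaussianPDF 0 v x * gaussianPDF x w y
      = ∫⁻ x, ENNReal.ofReal (gaussianPDFReal 0 v x * gaussianPDFReal x w y) := by
        simp_rw [gaussianPDF, ENNReal.ofReal_mul (gaussianPDFReal_nonneg 0 v _)]
    _ = ENNReal.ofReal (∫ x, gaussianPDFReal 0 v x * gaussianPDFReal x w y) :=
        (ofReal_integral_eq_lintegral_ofReal hint
          (ae_of_all _ fun x => mul_nonneg (gaussianPDFReal_nonneg _ _ _)
            (gaussianPDFReal_nonneg _ _ _))).symm
    _ = gaussianPDF 0 (v + w) y := by rw [gauss_conv_pdfReal hv hw y]; rfl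

lemma gauss_conv (v w : ℝ≥0) :
    ((gaussianReal 0 v).prod (gaussianReal 0 w)).map (fun p : ℝ × ℝ => p.1 + p.2)
      = gaussianReal 0 (v + w) := by
  by_cases hv : v = 0
  · subst hv
    rw [gaussianReal_zero_var, Measure.dirac_prod, Measure.map_map measurable_add
      measurable_prodMk_left]
    have : ((fun p : ℝ × ℝ => p.1 + p.2) ∘ Prod.mk 0) = fun y : ℝ => 0 + y := rfl
    rw [this]
    have := gaussianReal_map_const_add (μ := 0) (v := w) 0
    simpa using this
  by_cases hw : w = 0
  · subst hw
    rw [gaussianReal_zero_var, Measure.prod_dirac, Measure.map_map measurable_add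
      measurable_prodMk_right]
    have : ((fun p : ℝ × ℝ => p.1 + p.2) ∘ (fun x : ℝ => (x, (0:ℝ)))) = fun x : ℝ => x + 0 := rfl
    rw [this]
    have := gaussianReal_map_add_const (μ := 0) (v := v) 0
    simpa using this
  · ext s hs
    rw [Measure.map_apply measurable_add hs,
      Measure.prod_apply (measurable_add hs)]
    have h1 : ∀ x : ℝ, gaussianReal 0 w (Prod.mk x ⁻¹' ((fun p : ℝ × ℝ => p.1 + p.2) ⁻¹' s))
        = ∫⁻ y in s, gaussianPDF x w y := by
      intro x
      have : Prod.mk x ⁻¹' ((fun p : ℝ × ℝ => p.1 + p.2) ⁻¹' s) = (fun y => x + y) ⁻¹' s := rfl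
      rw [this, ← Measure.map_apply (by fun_prop) hs, gaussianReal_map_const_add,
        zero_add, gaussianReal_apply x hw s]
    simp_rw [h1]
    have hj2 : Measurable (fun p : ℝ × ℝ => gaussianPDF p.1 w p.2) := by
      have : (fun p : ℝ × ℝ => gaussianPDF p.1 w p.2)
          = fun p : ℝ × ℝ =>
            ENNReal.ofReal ((√(2 * π * w))⁻¹ * rexp (-(p.2 - p.1)^2 / (2 * w))) := rfl
      rw [this]
      fun_prop
    have hmeas : Measurable fun x => ∫⁻ y in s, gaussianPDF x w y :=
      Measurable.lintegral_prod_right (f := fun x y => gaussianPDF x w y) hj2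
    rw [gaussianReal_of_var_ne_zero 0 hv,
      lintegral_withDensity_eq_lintegral_mul _ (measurable_gaussianPDF 0 v) hmeas]
    simp only [Pi.mul_apply]
    have hswap : ∫⁻ x, gaussianPDF 0 v x * ∫⁻ y in s, gaussianPDF x w y
        = ∫⁻ y in s, ∫⁻ x, gaussianPDF 0 v x * gaussianPDF x w y := by
      have hc : ∀ x, gaussianPDF 0 v x * ∫⁻ y in s, gaussianPDF x w y
          = ∫⁻ y in s, gaussianPDF 0 v x * gaussianPDF x w y := fun x =>
        (lintegral_const_mul _ (measurable_gaussianPDF x w)).symm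
      rw [lintegral_congr hc, lintegral_lintegral_swap]
      exact (((measurable_gaussianPDF 0 v).comp measurable_fst).mul hj2).aemeasurable
    rw [hswap]
    simp_rw [gauss_conv_pdf_lintegral hv hw]
    rw [← withDensity_apply _ hs, ← gaussianReal_of_var_ne_zero 0 (by simp [hv])]

lemma measurable_lin {m : ℕ} (a : Fin m → ℝ) :
    Measurable (fun x : Fin m → ℝ => ∑ j, a j * x j) :=
  Finset.measurable_sum _ fun j _ => by fun_prop

lemma gauss_map_lin : ∀ (m : ℕ) (v : ℝ≥0) (a : Fin m → ℝ),
    (Measure.pi fun _ : Fin m => gaussianReal 0 v).map (fun x => ∑ j, a j * x j)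
      = gaussianReal 0 (Real.toNNReal (∑ j, (a j)^2) * v) := by
  intro m
  induction m with
  | zero =>
    intro v a
    simp only [Finset.univ_eq_empty, Finset.sum_empty]
    rw [show (fun _ : Fin 0 → ℝ => (0:ℝ)) = fun _ => (0:ℝ) from rfl]
    rw [Measure.map_const]
    simp [gaussianReal_zero_var]
  | succ m ih =>
    intro v a
    set e := MeasurableEquiv.piFinSuccAbove (fun _ : Fin (m + 1) => ℝ) 0 with he
    have hmp := measurePreserving_piFinSuccAbove (fun _ : Fin (m + 1) => gaussianReal 0 v) 0
    have hpi : (Measure.pi fun _ : Fin (m + 1) => gaussianReal 0 v)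
        = ((gaussianReal 0 v).prod (Measure.pi fun _ : Fin m => gaussianReal 0 v)).map e.symm :=
      (hmp.symm e).map_eq.symm
    rw [hpi, Measure.map_map (measurable_lin a) e.symm.measurable]
    have hcomp : ((fun x : Fin (m+1) → ℝ => ∑ j, a j * x j) ∘ e.symm)
        = (fun p : ℝ × ℝ => p.1 + p.2) ∘
          (Prod.map (fun x : ℝ => a 0 * x) (fun xt : Fin m → ℝ => ∑ j, a j.succ * xt j)) := by
      ext p
      simp only [Function.comp_apply, he, MeasurableEquiv.piFinSuccAbove_symm_apply,
        Prod.map_apply, Fin.insertNthEquiv_apply]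
      rw [Fin.insertNth_zero, Fin.sum_univ_succ]
      simp [Fin.cons_zero, Fin.cons_succ]
    rw [hcomp, ← Measure.map_map measurable_add
      (Measurable.prodMap (measurable_const_mul _) (measurable_lin _)),
      ← Measure.map_prod_map _ _ (measurable_const_mul _) (measurable_lin _),
      gaussianReal_map_const_mul, ih v (fun j => a j.succ), mul_zero, gauss_conv]
    congr 1
    have h1 : (0:ℝ) ≤ ∑ j : Fin m, (a j.succ)^2 := by positivity
    have h2 : (0:ℝ) ≤ ∑ j : Fin (m+1), (a j)^2 := by positivity
    ext
    push_cast [Real.coe_toNNReal _ h1, Real.coe_toNNReal _ h2]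
    rw [Fin.sum_univ_succ]
    ring

lemma gauss_noAtoms {v : ℝ≥0} (hv : v ≠ 0) (μ : ℝ) : NoAtoms (gaussianReal μ v) :=
  ⟨fun x => (gaussianReal_absolutelyContinuous μ hv) (measure_singleton x)⟩

lemma gauss_Ioi_eq_Iic_neg {v : ℝ≥0} (hv : v ≠ 0) (t : ℝ) :
    gaussianReal 0 v (Ioi t) = gaussianReal 0 v (Iic (-t)) := by
  have hone : (NNReal.mk ((-1:ℝ)^2) (sq_nonneg _) : ℝ≥0) = 1 := by ext; norm_num
  have hmap : (gaussianReal 0 v).map (fun x => (-1 : ℝ) * x) = gaussianReal 0 v := by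
    have := gaussianReal_map_const_mul (μ := 0) (v := v) (-1)
    rwa [mul_zero, hone, one_mul] at this
  have : gaussianReal 0 v (Iic (-t))
      = gaussianReal 0 v ((fun x => (-1 : ℝ) * x) ⁻¹' (Iic (-t))) := by
    conv_lhs => rw [← hmap]
    rw [Measure.map_apply (by fun_prop) measurableSet_Iic]
  rw [this]
  have hset : (fun x => (-1 : ℝ) * x) ⁻¹' (Iic (-t)) = Ici t := by
    ext x
    simp only [mem_preimage, mem_Iic, mem_Ici]
    constructor <;> intro h <;> linarith
  rw [hset]
  haveI : NullSingletonClass (gaussianReal 0 v) := gauss_noAtoms hv 0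
  exact measure_congr (Ioi_ae_eq_Ici (μ := gaussianReal 0 v) (a := t))

lemma gauss_scale {σ : ℝ} (hσ : 0 < σ) (z : ℝ) :
    gaussianReal 0 (Real.toNNReal (σ^2)) (Iic z) = gaussianReal 0 1 (Iic (z / σ)) := by
  have hvar : (NNReal.mk (σ^2) (sq_nonneg _) : ℝ≥0) * 1 = Real.toNNReal (σ^2) := by
    ext
    simp [Real.coe_toNNReal _ (sq_nonneg σ)]
  have hmap : (gaussianReal 0 1).map (fun x => σ * x) = gaussianReal 0 (Real.toNNReal (σ^2)) := by
    have := gaussianReal_map_const_mul (μ := 0) (v := 1) σ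
    rwa [mul_zero, hvar] at this
  rw [← hmap, Measure.map_apply (by fun_prop) measurableSet_Iic]
  congr 1
  ext x
  simp only [mem_preimage, mem_Iic]
  rw [le_div_iff₀ hσ, mul_comm]

/-- Lemma 1, second part. Under the hypotheses of Statement 0, the standard
accuracy of the max-`ℓ2`-margin solution `θ̂ = (1/√(r² + 4γ̃²)) • (r, 2γ̃ θ̃)` on test data from
`P_{r_test}` equals `Φ(r · r_test / (4σγ̃))`. -/
theorem std_accuracy_max_margin
    {m n : ℕ} (hm : 1 ≤ m) (hn : 0 < n) (r rtest σ : ℝ)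
    (hr : 0 < r) (hrtest : 0 < rtest) (hσ : 0 < σ)
    (x : Fin n → Fin (m + 1) → ℝ) (y : Fin n → ℝ)
    (hy : ∀ i, y i = 1 ∨ y i = -1)
    (hx1 : ∀ i, x i 0 = y i * (r / 2))
    (θt : Fin m → ℝ) (γt : ℝ)
    (hθt_norm : norm2 θt = 1)
    (hγt : γt = margin (fun i => Fin.tail (x i)) y θt)
    (hγt_pos : 0 < γt)
    (hθt_max : ∀ θ : Fin m → ℝ, norm2 θ ≤ 1 →
      margin (fun i => Fin.tail (x i)) y θ ≤ γt) :
    ∀ θhat : Fin (m + 1) → ℝ,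
      θhat = (Real.sqrt (r ^ 2 + 4 * γt ^ 2))⁻¹ •
        (Fin.cons r ((2 * γt) • θt) : Fin (m + 1) → ℝ) →
      ((Pdist m rtest σ) {p | 0 < p.2 * dot θhat p.1}).toReal
        = stdGaussianCDF (r * rtest / (4 * σ * γt)) := by
  intro θhat hθ
  -- basic facts
  set c : ℝ := Real.sqrt (r ^ 2 + 4 * γt ^ 2) with hc
  have hcpos : 0 < c := Real.sqrt_pos.mpr (by positivity)
  have hcip : 0 < c⁻¹ := inv_pos.mpr hcpos
  have hsum : ∑ j, (θt j)^2 = 1 := by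
    have h0 : (0:ℝ) ≤ ∑ j, (θt j)^2 := by positivity
    have := hθt_norm
    unfold norm2 at this
    nlinarith [Real.sq_sqrt h0]
  have hv : Real.toNNReal (σ^2) ≠ 0 := by
    simp only [ne_eq, Real.toNNReal_eq_zero, not_le]
    positivity
  -- dot product with a cons vector
  have hdot : ∀ (t : ℝ) (xt : Fin m → ℝ),
      dot θhat (Fin.cons t xt) = c⁻¹ * (r * t + 2 * γt * ∑ j, θt j * xt j) := by
    intro t xt
    rw [hθ]
    unfold dot
    rw [Fin.sum_univ_succ]
    simp only [Pi.smul_apply, smul_eq_mul, Fin.cons_zero, Fin.cons_succ]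
    have expand : c⁻¹ * (r * t + 2 * γt * ∑ j, θt j * xt j)
        = c⁻¹ * r * t + c⁻¹ * 2 * γt * ∑ j, θt j * xt j := by ring
    rw [expand, Finset.mul_sum]
    congr 1
    exact Finset.sum_congr rfl fun j _ => by ring
  -- measurability
  have hSmeas : MeasurableSet {p : (Fin (m+1) → ℝ) × ℝ | 0 < p.2 * dot θhat p.1} := by
    apply measurableSet_lt measurable_const
    exact measurable_snd.mul
      (Finset.measurable_sum _ fun j _ => by fun_prop)
  have hconsmeas : ∀ t : ℝ,
      Measurable (fun xt : Fin m → ℝ => (Fin.cons t xt : Fin (m+1) → ℝ)) := by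
    intro t
    apply measurable_pi_lambda
    intro j
    refine Fin.cases ?_ (fun i => ?_) j
    · simp only [Fin.cons_zero]; exact measurable_const
    · simp only [Fin.cons_succ]; exact measurable_pi_apply i
  have hf1 : Measurable (fun xt : Fin m → ℝ =>
      ((Fin.cons (rtest / 2) xt : Fin (m+1) → ℝ), (1:ℝ))) :=
    Measurable.prodMk (hconsmeas _) measurable_const
  have hf2 : Measurable (fun xt : Fin m → ℝ =>
      ((Fin.cons (-(rtest / 2)) xt : Fin (m+1) → ℝ), (-1:ℝ))) :=
    Measurable.prodMk (hconsmeas _) measurable_const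
  -- preimage computations
  set z : ℝ := r * rtest / (4 * γt) with hz
  have hpre1 : (fun xt : Fin m → ℝ =>
        ((Fin.cons (rtest / 2) xt : Fin (m+1) → ℝ), (1:ℝ)))
        ⁻¹' {p | 0 < p.2 * dot θhat p.1}
      = (fun xt => ∑ j, θt j * xt j) ⁻¹' (Ioi (-z)) := by
    ext xt
    simp only [mem_preimage, mem_setOf_eq, mem_Ioi, one_mul, hdot]
    rw [hz]
    constructor
    · intro h
      have hX : 0 < r * (rtest / 2) + 2 * γt * ∑ j, θt j * xt j := by
        by_contra hcon
        push_neg at hcon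
        nlinarith [mul_nonpos_of_nonneg_of_nonpos (le_of_lt hcip) hcon]
      rw [neg_lt, lt_div_iff₀ (by positivity : (0:ℝ) < 4 * γt)]
      nlinarith
    · intro h
      rw [neg_lt, lt_div_iff₀ (by positivity : (0:ℝ) < 4 * γt)] at h
      have hX : 0 < r * (rtest / 2) + 2 * γt * ∑ j, θt j * xt j := by nlinarith
      exact mul_pos hcip hX
  have hpre2 : (fun xt : Fin m → ℝ =>
        ((Fin.cons (-(rtest / 2)) xt : Fin (m+1) → ℝ), (-1:ℝ)))
        ⁻¹' {p | 0 < p.2 * dot θhat p.1}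
      = (fun xt => ∑ j, θt j * xt j) ⁻¹' (Iio z) := by
    ext xt
    simp only [mem_preimage, mem_setOf_eq, mem_Iio, hdot]
    rw [hz]
    constructor
    · intro h
      have hX : r * (-(rtest / 2)) + 2 * γt * ∑ j, θt j * xt j < 0 := by
        by_contra hcon
        push_neg at hcon
        nlinarith [mul_nonneg (le_of_lt hcip) hcon]
      rw [lt_div_iff₀ (by positivity : (0:ℝ) < 4 * γt)]
      nlinarith
    · intro h
      rw [lt_div_iff₀ (by positivity : (0:ℝ) < 4 * γt)] at h
      have hX : r * (-(rtest / 2)) + 2 * γt * ∑ j, θt j * xt j < 0 := by nlinarith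
      nlinarith [mul_pos hcip (neg_pos.mpr hX)]
  -- law of the linear functional
  have hTA : ∀ A : Set ℝ, MeasurableSet A →
      gaussPi m σ ((fun xt => ∑ j, θt j * xt j) ⁻¹' A)
        = gaussianReal 0 (Real.toNNReal (σ^2)) A := by
    intro A hA
    have : gaussPi m σ ((fun xt => ∑ j, θt j * xt j) ⁻¹' A)
        = ((Measure.pi fun _ : Fin m => gaussianReal 0 (Real.toNNReal (σ^2))).map
            (fun xt => ∑ j, θt j * xt j)) A := by
      rw [Measure.map_apply (measurable_lin θt) hA]; rfl
    rw [this, gauss_map_lin, hsum, Real.toNNReal_one, one_mul]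
  -- putting everything together
  have key : (Pdist m rtest σ) {p | 0 < p.2 * dot θhat p.1}
      = gaussianReal 0 1 (Iic (r * rtest / (4 * σ * γt))) := by
    have hG : gaussianReal 0 (Real.toNNReal (σ^2)) (Iic z)
        = gaussianReal 0 1 (Iic (r * rtest / (4 * σ * γt))) := by
      rw [gauss_scale hσ z]
      congr 1
      rw [hz, div_div]
      ring_nf
    have h1 : gaussianReal 0 (Real.toNNReal (σ^2)) (Ioi (-z))
        = gaussianReal 0 1 (Iic (r * rtest / (4 * σ * γt))) := by
      rw [gauss_Ioi_eq_Iic_neg hv, neg_neg, hG]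
    have h2 : gaussianReal 0 (Real.toNNReal (σ^2)) (Iio z)
        = gaussianReal 0 1 (Iic (r * rtest / (4 * σ * γt))) := by
      haveI : NullSingletonClass (gaussianReal 0 (Real.toNNReal (σ^2))) := gauss_noAtoms hv 0
      rw [measure_congr (Iio_ae_eq_Iic (μ := gaussianReal 0 (Real.toNNReal (σ^2))) (a := z)), hG]
    rw [Pdist, Measure.add_apply, Measure.smul_apply, Measure.smul_apply, smul_eq_mul,
      smul_eq_mul, Measure.map_apply hf1 hSmeas, Measure.map_apply hf2 hSmeas,
      hpre1, hpre2, hTA _ measurableSet_Ioi, hTA _ measurableSet_Iio, h1, h2,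
      ← add_mul, ENNReal.inv_two_add_inv_two, one_mul]
  rw [key]
  rfl

end
end

section
/- Let d ≥ 2, r > 0, σ > 0 and 0 ≤ ε_te with 2ε_te < r. For any θ ∈ ℝ^d whose first coordinate satisfies θ₁ > 0, the ε_te-robust accuracy of the linear classifier θ on P_r with respect to the signal-directed perturbation sets S_{ε_te} equals its standard accuracy on P_{r − 2ε_te}: P_{(X,Y)∼P_r}[min_{x' ∈ S_{ε_te}(X)} Y·θᵀx' > 0] = P_{(X,Y)∼P_{r−2ε_te}}[Y·θᵀX > 0]. -/
open MeasureTheory ProbabilityTheory Real Set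
open scoped ENNReal BigOperators

noncomputable section

lemma iInf_affine (ε a c : ℝ) (hε : 0 ≤ ε) :
    ⨅ β : {b : ℝ // |b| ≤ ε}, (c + β.1 * a) = c - ε * |a| := by
  have hne : Nonempty {b : ℝ // |b| ≤ ε} := ⟨⟨0, by simpa using hε⟩⟩
  have hbd : ∀ β : {b : ℝ // |b| ≤ ε}, c - ε * |a| ≤ c + β.1 * a := by
    intro β
    have h1 : |β.1 * a| ≤ ε * |a| := by
      rw [abs_mul]; exact mul_le_mul_of_nonneg_right β.2 (abs_nonneg a)
    have h2 := neg_abs_le (β.1 * a)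
    linarith
  apply le_antisymm
  · have hbb : BddBelow (Set.range fun β : {b : ℝ // |b| ≤ ε} => c + β.1 * a) := by
      refine ⟨c - ε * |a|, ?_⟩
      rintro _ ⟨β, rfl⟩; exact hbd β
    rcases le_or_gt 0 a with ha | ha
    · have := ciInf_le hbb ⟨-ε, by rw [abs_neg, abs_of_nonneg hε]⟩
      rw [abs_of_nonneg ha]
      refine this.trans ?_; simp
    · have := ciInf_le hbb ⟨ε, by rw [abs_of_nonneg hε]⟩
      rw [abs_of_neg ha]
      refine this.trans ?_; ring_nf; simp
  · exact le_ciInf hbd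

lemma dot_add_single {d : ℕ} [NeZero d] (θ x : Fin d → ℝ) (β : ℝ) :
    dot θ (x + β • (Pi.single 0 1 : Fin d → ℝ)) = dot θ x + β * θ 0 := by
  simp only [dot, Pi.add_apply, Pi.smul_apply, Pi.single_apply, smul_eq_mul, mul_add,
    Finset.sum_add_distrib, mul_ite, mul_one, mul_zero]
  simp [Finset.mul_sum, mul_comm]

lemma dot_cons {m : ℕ} (θ : Fin (m + 1) → ℝ) (c : ℝ) (xt : Fin m → ℝ) :
    dot θ (Fin.cons c xt) = θ 0 * c + ∑ j, θ j.succ * xt j := by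
  simp [dot, Fin.sum_univ_succ]

/-- For any linear classifier `θ` with positive first coordinate, its
`ε_te`-robust accuracy on `P_r` with respect to the signal-directed perturbation sets
`S_{ε_te}` equals its standard accuracy on `P_{r − 2ε_te}`. -/
theorem robust_accuracy_eq_shifted_std_accuracy
    {m : ℕ} (hm : 1 ≤ m) (r σ εte : ℝ) (hr : 0 < r) (hσ : 0 < σ)
    (hεte : 0 ≤ εte) (h2εte : 2 * εte < r)
    (θ : Fin (m + 1) → ℝ) (hθ1 : 0 < θ 0) :
    (Pdist m r σ) {p | 0 < ⨅ β : {b : ℝ // |b| ≤ εte},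
        p.2 * dot θ (p.1 + β.1 • (Pi.single 0 1 : Fin (m + 1) → ℝ))}
      = (Pdist m (r - 2 * εte) σ) {p | 0 < p.2 * dot θ p.1} := by

  have key : {p : (Fin (m + 1) → ℝ) × ℝ | 0 < ⨅ β : {b : ℝ // |b| ≤ εte},
        p.2 * dot θ (p.1 + β.1 • (Pi.single 0 1 : Fin (m + 1) → ℝ))}
      = {p : (Fin (m + 1) → ℝ) × ℝ | 0 < p.2 * dot θ p.1 - εte * |p.2 * θ 0|} := by
    ext p
    have h1 : ∀ β : {b : ℝ // |b| ≤ εte},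
        p.2 * dot θ (p.1 + β.1 • (Pi.single 0 1 : Fin (m + 1) → ℝ))
          = p.2 * dot θ p.1 + β.1 * (p.2 * θ 0) := by
      intro β; rw [dot_add_single]; ring
    simp only [Set.mem_setOf_eq]
    rw [iInf_congr h1, iInf_affine _ _ _ hεte]
  rw [key]
  have hdm : Measurable (fun p : (Fin (m + 1) → ℝ) × ℝ => dot θ p.1) := by
    unfold dot; fun_prop
  have hS' : MeasurableSet {p : (Fin (m + 1) → ℝ) × ℝ | 0 < p.2 * dot θ p.1 - εte * |p.2 * θ 0|} :=
    measurableSet_lt measurable_const (by fun_prop)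
  have hT : MeasurableSet {p : (Fin (m + 1) → ℝ) × ℝ | 0 < p.2 * dot θ p.1} :=
    measurableSet_lt measurable_const (by fun_prop)
  have hf : ∀ (c y : ℝ), Measurable (fun xt : Fin m → ℝ =>
      ((Fin.cons c xt : Fin (m + 1) → ℝ), y)) := by
    intro c y
    refine Measurable.prod ?_ measurable_const
    refine measurable_pi_lambda _ fun i => ?_
    refine Fin.cases ?_ ?_ i
    · simpa using measurable_const
    · intro j; simpa using measurable_pi_apply j
  simp only [Pdist, Measure.coe_add, Measure.coe_smul, Pi.add_apply, Pi.smul_apply,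
    Measure.map_apply (hf _ _) hS', Measure.map_apply (hf _ _) hT]
  have e1 : (fun xt : Fin m → ℝ => ((Fin.cons (r / 2) xt : Fin (m + 1) → ℝ), (1 : ℝ))) ⁻¹'
      {p | 0 < p.2 * dot θ p.1 - εte * |p.2 * θ 0|}
      = (fun xt : Fin m → ℝ => ((Fin.cons ((r - 2 * εte) / 2) xt : Fin (m + 1) → ℝ), (1 : ℝ))) ⁻¹'
      {p | 0 < p.2 * dot θ p.1} := by
    ext xt
    simp only [Set.mem_preimage, Set.mem_setOf_eq, dot_cons, one_mul, abs_of_pos hθ1]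
    constructor <;> intro h <;> nlinarith [h]
  have e2 : (fun xt : Fin m → ℝ => ((Fin.cons (-(r / 2)) xt : Fin (m + 1) → ℝ), (-1 : ℝ))) ⁻¹'
      {p | 0 < p.2 * dot θ p.1 - εte * |p.2 * θ 0|}
      = (fun xt : Fin m → ℝ =>
          ((Fin.cons (-((r - 2 * εte) / 2)) xt : Fin (m + 1) → ℝ), (-1 : ℝ))) ⁻¹'
      {p | 0 < p.2 * dot θ p.1} := by
    ext xt
    have habs : |(-1 : ℝ) * θ 0| = θ 0 := by
      rw [neg_one_mul, abs_neg, abs_of_pos hθ1]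
    simp only [Set.mem_preimage, Set.mem_setOf_eq, dot_cons, habs]
    constructor <;> intro h <;> nlinarith [h]
  rw [e1, e2]

end
end

section
/- For every fixed x > 0, the function f(φ) = (1/(√(2π)·φ))·exp(−x²/φ²) is monotonically increasing in φ on the interval (0, √2·x]. -/
open Real Set

lemma density_hasDerivAt (x φ : ℝ) (hφ : φ ≠ 0) :
    HasDerivAt (fun φ : ℝ => 1 / (Real.sqrt (2 * Real.pi) * φ) * Real.exp (-x ^ 2 / φ ^ 2))
      ((Real.sqrt (2 * Real.pi))⁻¹ * ((-(φ ^ 2)⁻¹) * Real.exp (-x ^ 2 / φ ^ 2)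
        + φ⁻¹ * (Real.exp (-x ^ 2 / φ ^ 2) * (-x ^ 2 * -(2 * φ) / (φ ^ 2) ^ 2)))) φ := by
  have hsq : (φ : ℝ) ^ 2 ≠ 0 := pow_ne_zero 2 hφ
  have h1 : HasDerivAt (fun φ : ℝ => φ⁻¹) (-(φ ^ 2)⁻¹) φ := by
    simpa using hasDerivAt_inv hφ
  have h2 : HasDerivAt (fun φ : ℝ => (φ ^ 2)⁻¹) (-(2 * φ) / (φ ^ 2) ^ 2) φ := by
    have := (hasDerivAt_pow 2 φ).inv hsq
    simp at this
    exact this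
  have hg : HasDerivAt (fun φ : ℝ => -x ^ 2 / φ ^ 2) (-x ^ 2 * (-(2 * φ) / (φ ^ 2) ^ 2)) φ := by
    have := h2.const_mul (-x ^ 2)
    simpa [div_eq_mul_inv] using this
  have hexp : HasDerivAt (fun φ : ℝ => Real.exp (-x ^ 2 / φ ^ 2))
      (Real.exp (-x ^ 2 / φ ^ 2) * (-x ^ 2 * -(2 * φ) / (φ ^ 2) ^ 2)) φ := by
    convert hg.exp using 1
    ring
  have hmul := (h1.mul hexp).const_mul (Real.sqrt (2 * Real.pi))⁻¹
  have heq : (fun φ : ℝ => (Real.sqrt (2 * Real.pi))⁻¹ * (φ⁻¹ * Real.exp (-x ^ 2 / φ ^ 2)))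
      = fun φ : ℝ => 1 / (Real.sqrt (2 * Real.pi) * φ) * Real.exp (-x ^ 2 / φ ^ 2) := by
    funext t
    field_simp
  rw [← heq]
  exact hmul

/-- For every fixed `x > 0`, the function
`φ ↦ (1/(√(2π) φ)) · exp(−x²/φ²)` is monotonically increasing on `(0, √2 · x]`. -/
theorem density_monotone_on
    (x : ℝ) (hx : 0 < x) :
    MonotoneOn (fun φ : ℝ => 1 / (Real.sqrt (2 * Real.pi) * φ) * Real.exp (-x ^ 2 / φ ^ 2))
      (Ioc 0 (Real.sqrt 2 * x)) := by
  have hπ : 0 < Real.sqrt (2 * Real.pi) := Real.sqrt_pos.2 (by positivity)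
  apply monotoneOn_of_deriv_nonneg (convex_Ioc _ _)
  · -- continuity on Ioc
    apply ContinuousOn.mul
    · apply ContinuousOn.div continuousOn_const
      · exact (continuousOn_const.mul continuousOn_id)
      · intro t ht
        exact mul_ne_zero hπ.ne' (ne_of_gt ht.1)
    · apply Real.continuous_exp.comp_continuousOn
      apply ContinuousOn.div continuousOn_const (continuousOn_pow 2)
      intro t ht
      exact pow_ne_zero 2 (ne_of_gt ht.1)
  · rw [interior_Ioc]
    intro t ht
    exact (density_hasDerivAt x t (ne_of_gt ht.1)).differentiableAt.differentiableWithinAt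
  · rw [interior_Ioc]
    intro t ht
    have ht0 : 0 < t := ht.1
    have hder := density_hasDerivAt x t ht0.ne'
    rw [hder.deriv]
    have hE : 0 < Real.exp (-x ^ 2 / t ^ 2) := Real.exp_pos _
    have h2 : t ^ 2 < 2 * x ^ 2 := by
      have := ht.2
      have hs : Real.sqrt 2 ^ 2 = 2 := Real.sq_sqrt (by norm_num)
      nlinarith [Real.sqrt_nonneg 2]
    have key : (-(t ^ 2)⁻¹) * Real.exp (-x ^ 2 / t ^ 2)
        + t⁻¹ * (Real.exp (-x ^ 2 / t ^ 2) * (-x ^ 2 * -(2 * t) / (t ^ 2) ^ 2))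
        = Real.exp (-x ^ 2 / t ^ 2) * (2 * x ^ 2 - t ^ 2) / t ^ 4 := by
      field_simp
      ring
    rw [key]
    have h3 : (0:ℝ) ≤ 2 * x ^ 2 - t ^ 2 := by linarith
    exact mul_nonneg (by positivity)
      (div_nonneg (mul_nonneg hE.le h3) (by positivity))
end
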